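/- arXiv:1909.13082 — 2 statements merged into one kernel-verified Lean document; each statement's English description precedes it below -/
import Mathlib

section
/- Suppose in addition that Corr(P, Q | ψ†, φ‡; λ) ≤ Corr(P, Q) + ε for some ε ≥ 0. Then the inverse generative property holds: W₂²((∇φ‡)_*Q, P) ≤ ε / (β† − 1/λ). -/
open MeasureTheory ENNReal
open scoped RealInnerProductSpace

/-- Squared Wasserstein-2 distance: infimum over couplings of `∫ ‖x - y‖² / 2`. -/
noncomputable def W2sq {E : Type*} [NormedAddCommGroup E] [MeasurableSpace E]
    (μ ν : Measure E) : ℝ≥0∞ :=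
  ⨅ (π : Measure (E × E)) (_ : IsProbabilityMeasure π)
    (_ : π.map Prod.fst = μ) (_ : π.map Prod.snd = ν),
    ∫⁻ p, ENNReal.ofReal (‖p.1 - p.2‖ ^ 2 / 2) ∂π

section Aux
variable {E : Type*} [NormedAddCommGroup E] [InnerProductSpace ℝ E] [CompleteSpace E]

lemma strong_grad_ineq (ψ : E → ℝ) (hψ : Differentiable ℝ ψ) (β : ℝ)
    (hstrong : ConvexOn ℝ Set.univ (fun x => ψ x - β / 2 * ‖x‖ ^ 2)) (a b : E) :
    ψ a + ⟪gradient ψ a, b - a⟫ + β / 2 * ‖b - a‖ ^ 2 ≤ ψ b := by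
  set L : ℝ → E := fun t => t • (b - a) + a with hLdef
  have hLd : ∀ t : ℝ, HasDerivAt L (b - a) t := fun t => by
    simpa [hLdef] using ((hasDerivAt_id t).smul_const (b - a)).add_const a
  have hL0 : L 0 = a := by simp [hLdef]
  have hL1 : L 1 = b := by simp [hLdef]
  have hgrad : HasFDerivAt ψ (InnerProductSpace.toDual ℝ E (gradient ψ a)) (L 0) := by
    rw [hL0]; exact (hψ a).hasGradientAt.hasFDerivAt
  have h1 : HasDerivAt (fun t => ψ (L t)) (⟪gradient ψ a, b - a⟫) 0 := by
    have := hgrad.comp_hasDerivAt 0 (hLd 0)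
    rw [InnerProductSpace.toDual_apply_apply] at this
    exact this
  have h2 : HasDerivAt (fun t => ‖L t‖ ^ 2) (2 * ⟪a, b - a⟫) 0 := by
    have h2' := (hLd 0).inner ℝ (hLd 0)
    rw [hL0] at h2'
    have heq : (fun t => ‖L t‖ ^ 2) = fun t => ⟪L t, L t⟫ :=
      funext fun t => (real_inner_self_eq_norm_sq _).symm
    rw [heq]
    refine h2'.congr_deriv ?_
    rw [real_inner_comm (b - a) a]; ring
  have hqd : HasDerivAt (fun t => ψ (L t) - β / 2 * ‖L t‖ ^ 2)
      (⟪gradient ψ a, b - a⟫ - β / 2 * (2 * ⟪a, b - a⟫)) 0 := h1.sub (h2.const_mul (β / 2))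
  have hq : ConvexOn ℝ Set.univ (fun t => ψ (L t) - β / 2 * ‖L t‖ ^ 2) := by
    have := hstrong.comp_affineMap (AffineMap.lineMap a b : ℝ →ᵃ[ℝ] E)
    simpa [Set.preimage_univ, Function.comp_def, AffineMap.lineMap_apply, hLdef] using this
  have hslope := hq.le_slope_of_hasDerivAt (Set.mem_univ 0) (Set.mem_univ 1) zero_lt_one hqd
  rw [slope_def_field] at hslope
  rw [hL0, hL1] at hslope
  have e1 : ⟪a, b - a⟫ = ⟪a, b⟫ - ‖a‖ ^ 2 := by
    rw [inner_sub_right, real_inner_self_eq_norm_sq]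
  have e2 : ‖b - a‖ ^ 2 = ‖b‖ ^ 2 - 2 * ⟪b, a⟫ + ‖a‖ ^ 2 := norm_sub_sq_real b a
  have e3 : ⟪b, a⟫ = ⟪a, b⟫ := real_inner_comm _ _
  norm_num at hslope
  have e4 : ⟪gradient ψ a, b - a⟫ = fderiv ℝ ψ a b - fderiv ℝ ψ a a := by
    simp [gradient, inner_sub_right]
  rw [e1] at hslope; rw [e2, e3]; nlinarith [hslope, e4]

lemma measurable_gradient' [MeasurableSpace E] [BorelSpace E] (f : E → ℝ) :
    Measurable (gradient f) :=
  ((InnerProductSpace.toDual ℝ E).symm.continuous.measurable).comp (measurable_fderiv ℝ f)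

end Aux

set_option maxHeartbeats 1000000 in
/-- Inverse generative property: if the regularized correlations are `ε`-close to the
true correlations, then `W₂²((∇φ‡)_*Q, P) ≤ ε / (β† - 1/λ)`. -/
theorem inverse_generative_property {D : ℕ}
    (P Q : Measure (EuclideanSpace ℝ (Fin D)))
    [IsProbabilityMeasure P] [IsProbabilityMeasure Q]
    (hP2 : Integrable (fun x => ‖x‖ ^ 2) P)
    (hQ2 : Integrable (fun y => ‖y‖ ^ 2) Q)
    -- Brenier potentials
    (ψs φs : EuclideanSpace ℝ (Fin D) → ℝ)
    (hψs : Differentiable ℝ ψs) (hψsc : ConvexOn ℝ Set.univ ψs)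
    (hφs : Differentiable ℝ φs) (hφsc : ConvexOn ℝ Set.univ φs)
    (hinv : ∀ y, gradient ψs (gradient φs y) = y)
    (hQP : Q.map (gradient φs) = P)
    (hPQ : P.map (gradient ψs) = Q)
    -- discriminators
    (ψd : EuclideanSpace ℝ (Fin D) → ℝ) (hψd : Differentiable ℝ ψd)
    (βd : ℝ) (hβd : 0 < βd)
    (hstrong : ConvexOn ℝ Set.univ (fun x => ψd x - βd / 2 * ‖x‖ ^ 2))
    (φc : EuclideanSpace ℝ (Fin D) → ℝ) (hφc : Differentiable ℝ φc)
    (hφcc : ConvexOn ℝ Set.univ φc)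
    (lam : ℝ) (hlam : 1 / βd < lam)
    -- integrability of all the integrals involved
    (hI1 : Integrable ψd P)
    (hI2 : Integrable (fun y => ⟪gradient φc y, y⟫ - ψd (gradient φc y)) Q)
    (hI3 : Integrable (fun y => ‖gradient ψd (gradient φc y) - y‖ ^ 2) Q)
    (hI4 : Integrable (fun y => ⟪y, gradient φs y⟫) Q)
    (ε : ℝ) (hε : 0 ≤ ε)
    (hclose : (∫ x, ψd x ∂P) + (∫ y, (⟪gradient φc y, y⟫ - ψd (gradient φc y)) ∂Q)
        + lam / 2 * (∫ y, ‖gradient ψd (gradient φc y) - y‖ ^ 2 ∂Q) ≤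
      (∫ y, ⟪y, gradient φs y⟫ ∂Q) + ε) :
    W2sq (Q.map (gradient φc)) P ≤ ENNReal.ofReal (ε / (βd - 1 / lam)) := by
  have hlam0 : 0 < lam := lt_trans (by positivity) hlam
  have hc : 0 < βd - 1 / lam := by
    have : 1 / lam < βd := (one_div_lt hlam0 hβd).mpr hlam
    linarith
  set c := βd - 1 / lam with hcdef
  clear_value c
  set G := gradient φc with hGdef
  set S := gradient φs with hSdef
  set T := gradient ψd with hTdef
  have hGm : Measurable G := measurable_gradient' φc
  have hSm : Measurable S := measurable_gradient' φs
  have hpair : Measurable fun y => (G y, S y) := hGm.prodMk hSm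
  clear_value G S T
  set π : Measure (EuclideanSpace ℝ (Fin D) × EuclideanSpace ℝ (Fin D)) :=
    Q.map (fun y => (G y, S y)) with hπ
  haveI : IsProbabilityMeasure π := Measure.isProbabilityMeasure_map hpair.aemeasurable
  have hfst : π.map Prod.fst = Q.map G := by
    rw [hπ, Measure.map_map measurable_fst hpair]; rfl
  have hsnd : π.map Prod.snd = P := by
    rw [hπ, Measure.map_map measurable_snd hpair]; exact hQP
  -- the defect function
  set F : EuclideanSpace ℝ (Fin D) → ℝ := fun y =>
    ψd (S y) + (⟪G y, y⟫ - ψd (G y)) - ⟪y, S y⟫ + lam / 2 * ‖T (G y) - y‖ ^ 2 with hF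
  clear_value F
  -- pointwise bound
  have hpt : ∀ y, c / 2 * ‖G y - S y‖ ^ 2 ≤ F y := by
    intro y
    have hsg := strong_grad_ineq ψd hψd βd hstrong (G y) (S y)
    set v := T (G y) - y with hv
    set w := S y - G y with hw
    have hnn : (0:ℝ) ≤ ‖lam • v + w‖ ^ 2 := sq_nonneg _
    have hexp : ‖lam • v + w‖ ^ 2
        = lam ^ 2 * ‖v‖ ^ 2 + 2 * lam * ⟪v, w⟫ + ‖w‖ ^ 2 := by
      rw [norm_add_sq_real, norm_smul, real_inner_smul_left]
      rw [Real.norm_eq_abs, mul_pow, sq_abs]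
      ring
    have hiv : -(lam / 2 * ‖v‖ ^ 2) - (1 / lam) / 2 * ‖w‖ ^ 2 ≤ ⟪v, w⟫ := by
      rw [hexp] at hnn
      have hme : 2 * lam * (lam / 2 * ‖v‖ ^ 2 + ⟪v, w⟫ + (1 / lam) / 2 * ‖w‖ ^ 2)
          = lam ^ 2 * ‖v‖ ^ 2 + 2 * lam * ⟪v, w⟫ + ‖w‖ ^ 2 := by
        field_simp
      nlinarith [hnn, hme, hlam0]
    have einner : ⟪v, w⟫ = ⟪T (G y), w⟫ - ⟪y, w⟫ := by rw [hv, inner_sub_left]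
    have e2 : ⟪y, w⟫ = ⟪y, S y⟫ - ⟪G y, y⟫ := by
      rw [hw, inner_sub_right, real_inner_comm (G y) y]
    have enorm : ‖G y - S y‖ ^ 2 = ‖w‖ ^ 2 := by rw [hw, norm_sub_rev]
    have hgrad : T = gradient ψd := hTdef
    rw [← hTdef] at hsg
    rw [hF]
    simp only
    rw [enorm, hcdef]
    rw [← hv]
    clear_value v w
    nlinarith [hsg, hiv, einner, e2]
  have hFnn : ∀ y, 0 ≤ F y := fun y => le_trans (by positivity) (hpt y)
  -- integrability
  have hI1' : Integrable ψd (Q.map S) := by rw [hQP]; exact hI1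
  have hcomp : Integrable (fun y => ψd (S y)) Q :=
    (integrable_map_measure hI1'.aestronglyMeasurable hSm.aemeasurable).mp hI1'
  have hB : Integrable (fun y => lam / 2 * ‖T (G y) - y‖ ^ 2) Q := hI3.const_mul (lam / 2)
  have hA2 : Integrable (fun y => ψd (S y) + (⟪G y, y⟫ - ψd (G y))) Q := by
    exact hcomp.add hI2
  have hA : Integrable (fun y => ψd (S y) + (⟪G y, y⟫ - ψd (G y)) - ⟪y, S y⟫) Q := by
    exact hA2.sub hI4
  have hFi : Integrable F Q := by rw [hF]; exact hA.add hB
  have e0 : ∫ y, ψd (S y) ∂Q = ∫ x, ψd x ∂P := by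
    rw [← hQP]; exact (integral_map hSm.aemeasurable hI1'.aestronglyMeasurable).symm
  have hint : ∫ y, F y ∂Q ≤ ε := by
    have h1 : ∫ y, F y ∂Q = (∫ y, ψd (S y) ∂Q)
        + (∫ y, (⟪G y, y⟫ - ψd (G y)) ∂Q) - (∫ y, ⟪y, S y⟫ ∂Q)
        + lam / 2 * (∫ y, ‖T (G y) - y‖ ^ 2 ∂Q) := by
      simp only [hF]
      rw [integral_add hA hB, integral_sub hA2 hI4, integral_add hcomp hI2,
        integral_const_mul]
    rw [h1, e0]
    linarith [hclose]
  -- put it together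
  have hmf : Measurable fun p : EuclideanSpace ℝ (Fin D) × EuclideanSpace ℝ (Fin D) =>
      ENNReal.ofReal (‖p.1 - p.2‖ ^ 2 / 2) := by
    apply Measurable.ennreal_ofReal
    exact ((measurable_fst.sub measurable_snd).norm.pow_const 2).div_const 2
  calc W2sq (Q.map G) P ≤ ∫⁻ p, ENNReal.ofReal (‖p.1 - p.2‖ ^ 2 / 2) ∂π := by
        unfold W2sq
        exact iInf_le_of_le π (iInf_le_of_le ‹_› (iInf_le_of_le hfst (iInf_le_of_le hsnd le_rfl)))
    _ = ∫⁻ y, ENNReal.ofReal (‖G y - S y‖ ^ 2 / 2) ∂Q := by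
        rw [hπ]; exact lintegral_map hmf hpair
    _ ≤ ∫⁻ y, ENNReal.ofReal (F y / c) ∂Q := by
        refine lintegral_mono fun y => ENNReal.ofReal_le_ofReal ?_
        rw [div_le_div_iff₀ (by norm_num : (0:ℝ) < 2) hc]
        nlinarith [hpt y]
    _ = ENNReal.ofReal (∫ y, F y / c ∂Q) :=
        (ofReal_integral_eq_lintegral_ofReal (hFi.div_const c)
          (Filter.Eventually.of_forall fun y => div_nonneg (hFnn y) hc.le)).symm
    _ ≤ ENNReal.ofReal (ε / c) := by
        refine ENNReal.ofReal_le_ofReal ?_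
        rw [integral_div]
        exact div_le_div_of_nonneg_right hint hc.le
end

section
/- Suppose in addition that ψ† has a B†-Lipschitz gradient with B† ≥ β†, that there exists a differentiable convex function φ† : ℝ^D → ℝ with ∇ψ†(∇φ†(y)) = y and ∇φ†(∇ψ†(x)) = x for all x, y and with ∇φ† Lipschitz with constant 1/β†, and that Corr(P, Q | ψ†, φ‡; λ) ≤ Corr(P, Q) + ε for some ε ≥ 0. Then the forward generative property holds: W₂²((∇ψ†)_*P, Q) ≤ ((B†)² · ε / (λβ† − 1)) · (1/√β† + √λ)². -/
open MeasureTheory ENNReal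
open scoped RealInnerProductSpace

/-- Gradient inequality for differentiable convex functions. -/
theorem grad_ineq_aux {F : Type*} [NormedAddCommGroup F] [InnerProductSpace ℝ F]
    [CompleteSpace F] {f : F → ℝ} (hf : Differentiable ℝ f)
    (hc : ConvexOn ℝ Set.univ f) (u v : F) :
    f u + ⟪gradient f u, v - u⟫ ≤ f v := by
  set w := v - u with hw
  have hline : ∀ t : ℝ, HasDerivAt (fun t : ℝ => u + t • w) w t := fun t => by
    simpa using ((hasDerivAt_id t).smul_const w).const_add u
  have hg : ∀ t : ℝ, HasDerivAt (fun t : ℝ => f (u + t • w))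
      ⟪gradient f (u + t • w), w⟫ t := by
    intro t
    have hF := ((hf (u + t • w)).hasGradientAt).hasFDerivAt
    have := hF.comp_hasDerivAt t (hline t)
    simpa [InnerProductSpace.toDual_apply_apply, Function.comp_def] using this
  have hconv : ConvexOn ℝ Set.univ (fun t : ℝ => f (u + t • w)) := by
    have h2 := hc.comp_affineMap (AffineMap.lineMap u v)
    have : (fun t : ℝ => f (u + t • w)) = (f ∘ (AffineMap.lineMap u v)) := by
      funext t
      simp [AffineMap.lineMap_apply, hw, add_comm]
    rw [this]
    simpa using h2
  have h0 : HasDerivAt (fun t : ℝ => f (u + t • w)) ⟪gradient f u, w⟫ 0 := by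
    simpa using hg 0
  have hsl := hconv.le_slope_of_hasDerivAt (Set.mem_univ (0:ℝ)) (Set.mem_univ (1:ℝ))
    one_pos h0
  rw [slope_def_field] at hsl
  simp only [one_smul, zero_smul, add_zero, sub_zero, div_one] at hsl
  have : u + w = v := by rw [hw]; abel
  rw [this] at hsl
  linarith

/-- Gradient inequality for differentiable strongly convex functions. -/
theorem strong_grad_ineq_aux {F : Type*} [NormedAddCommGroup F] [InnerProductSpace ℝ F]
    [CompleteSpace F] {f : F → ℝ} (hf : Differentiable ℝ f) {β : ℝ}
    (hc : ConvexOn ℝ Set.univ (fun x => f x - β / 2 * ‖x‖ ^ 2)) (u v : F) :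
    f u + ⟪gradient f u, v - u⟫ + β / 2 * ‖v - u‖ ^ 2 ≤ f v := by
  set h : F → ℝ := fun x => f x - β / 2 * ‖x‖ ^ 2 with hh
  have hdn : Differentiable ℝ (fun x : F => ‖x‖ ^ 2) := fun x =>
    ((hasFDerivAt_id x).norm_sq).differentiableAt
  have hdh : Differentiable ℝ h := hf.sub (hdn.const_mul (β / 2))
  have hgradh : ∀ x : F, HasGradientAt h (gradient f x - β • x) x := by
    intro x
    have h1 := ((hf x).hasGradientAt).hasFDerivAt
    have h2 : HasFDerivAt (fun y : F => β / 2 * ‖y‖ ^ 2)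
        ((β / 2) • (2 • (innerSL ℝ x).comp (ContinuousLinearMap.id ℝ F))) x :=
      ((hasFDerivAt_id x).norm_sq).const_mul (β / 2)
    have h3 := h1.sub h2
    have e : (InnerProductSpace.toDual ℝ F) (gradient f x - β • x)
        = InnerProductSpace.toDual ℝ F (gradient f x)
          - (β / 2) • (2 • (innerSL ℝ x).comp (ContinuousLinearMap.id ℝ F)) := by
      ext y
      simp [inner_sub_left, real_inner_smul_left]
      ring
    rw [hasGradientAt_iff_hasFDerivAt, e]
    exact h3
  have hcg := grad_ineq_aux hdh hc u v
  rw [(hgradh u).gradient] at hcg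
  have e1 : ⟪gradient f u - β • u, v - u⟫ = ⟪gradient f u, v - u⟫ - β * ⟪u, v - u⟫ := by
    rw [inner_sub_left, real_inner_smul_left]
  have e3 : ⟪u, v - u⟫ = ⟪u, v⟫ - ‖u‖ ^ 2 := by
    rw [inner_sub_right, real_inner_self_eq_norm_sq]
  have e2 : ‖v - u‖ ^ 2 = ‖v‖ ^ 2 - 2 * ⟪u, v⟫ + ‖u‖ ^ 2 := by
    rw [norm_sub_sq_real, real_inner_comm]
  simp only [hh] at hcg
  rw [e1, e3] at hcg
  rw [e2]
  nlinarith [hcg]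

/-- The gradient of any function on a Euclidean space is measurable. -/
theorem measurable_gradient_aux {D : ℕ} (f : EuclideanSpace ℝ (Fin D) → ℝ) :
    Measurable (gradient f) := by
  have hc : Continuous fun L : EuclideanSpace ℝ (Fin D) →L[ℝ] ℝ =>
      (InnerProductSpace.toDual ℝ (EuclideanSpace ℝ (Fin D))).symm L :=
    (InnerProductSpace.toDual ℝ (EuclideanSpace ℝ (Fin D))).symm.continuous
  exact hc.measurable.comp (measurable_fderiv ℝ f)


/-- Pointwise arithmetic core. -/
theorem pointwise_core_aux {βd lam Bd s a b q J n : ℝ} (hβd : 0 < βd) (hlam0 : 0 < lam)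
    (hs1 : 1 < s) (hs2 : s ^ 2 = lam * βd)
    (hq : q = lam / 2 * a ^ 2 - a * b + βd / 2 * b ^ 2)
    (hqI : q ≤ J) (hn : 0 ≤ n) (hup : n ≤ Bd * b + a) :
    n ^ 2 ≤ (Bd ^ 2 / βd + 1 / lam) * (2 * s / (s - 1)) * J := by
  have hsm1 : (0:ℝ) < s - 1 := by linarith
  have hsab : 2 * s * (a * b) ≤ βd * b ^ 2 + lam * a ^ 2 := by
    nlinarith [sq_nonneg (s * a - βd * b), hβd, hs2, sq_nonneg a, sq_nonneg b]
  have hm : βd * b ^ 2 + lam * a ^ 2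
      ≤ 2 * s / (s - 1) * (lam / 2 * a ^ 2 - a * b + βd / 2 * b ^ 2) := by
    rw [div_mul_eq_mul_div, le_div_iff₀ hsm1]
    nlinarith [hsab]
  have hsq : n ^ 2 ≤ (Bd * b + a) ^ 2 := by nlinarith
  have hcs2 : (Bd * b + a) ^ 2 ≤ (Bd ^ 2 / βd + 1 / lam) * (βd * b ^ 2 + lam * a ^ 2) := by
    rw [div_add_div _ _ (ne_of_gt hβd) (ne_of_gt hlam0), div_mul_eq_mul_div,
      le_div_iff₀ (by positivity)]
    nlinarith [sq_nonneg (Bd * lam * a - βd * b)]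
  have hA : (0:ℝ) ≤ Bd ^ 2 / βd + 1 / lam := by positivity
  have hB : (0:ℝ) ≤ 2 * s / (s - 1) := by
    apply div_nonneg <;> linarith
  calc n ^ 2 ≤ (Bd ^ 2 / βd + 1 / lam) * (βd * b ^ 2 + lam * a ^ 2) := le_trans hsq hcs2
    _ ≤ (Bd ^ 2 / βd + 1 / lam) * (2 * s / (s - 1) * (lam / 2 * a ^ 2 - a * b + βd / 2 * b ^ 2)) :=
        mul_le_mul_of_nonneg_left hm hA
    _ ≤ (Bd ^ 2 / βd + 1 / lam) * (2 * s / (s - 1) * J) := by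
        refine mul_le_mul_of_nonneg_left (mul_le_mul_of_nonneg_left ?_ hB) hA
        rw [← hq]
        exact hqI
    _ = (Bd ^ 2 / βd + 1 / lam) * (2 * s / (s - 1)) * J := by ring

/-- Constant comparison core. -/
theorem const_core_aux {βd lam Bd s ε : ℝ} (hβd : 0 < βd) (hlam0 : 0 < lam)
    (hBd : βd ≤ Bd) (hs1 : 1 < s) (hε : 0 ≤ ε)
    (hs : s = Real.sqrt (lam * βd)) (hs2 : s ^ 2 = lam * βd) :
    (Bd ^ 2 / βd + 1 / lam) * (2 * s / (s - 1)) * ε / 2 ≤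
      Bd ^ 2 * ε / (lam * βd - 1) * (1 / Real.sqrt βd + Real.sqrt lam) ^ 2 := by
  have hsm1 : (0:ℝ) < s - 1 := by linarith
  have ht1 : 0 < Real.sqrt βd := Real.sqrt_pos.mpr hβd
  have ht2 : 0 < Real.sqrt lam := Real.sqrt_pos.mpr hlam0
  have ht1sq : Real.sqrt βd ^ 2 = βd := Real.sq_sqrt hβd.le
  have ht2sq : Real.sqrt lam ^ 2 = lam := Real.sq_sqrt hlam0.le
  have hts : Real.sqrt lam * Real.sqrt βd = s := by
    rw [hs, Real.sqrt_mul hlam0.le]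
  have e2 : (1 / Real.sqrt βd + Real.sqrt lam) ^ 2 = (1 + s) ^ 2 / βd := by
    rw [← ht1sq, ← hts]
    field_simp
    rw [Real.sqrt_sq ht1.le]
  have hkey : βd * s ≤ lam * Bd ^ 2 := by
    have k1 : βd * s ≤ βd * s ^ 2 := by
      nlinarith [mul_pos hβd (mul_pos (show (0:ℝ) < s by linarith) hsm1)]
    have k2 : βd * s ^ 2 = lam * βd ^ 2 := by rw [hs2]; ring
    have k3 : lam * βd ^ 2 ≤ lam * Bd ^ 2 := by
      have : βd ^ 2 ≤ Bd ^ 2 := by nlinarith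
      nlinarith
    linarith
  have h : (Bd ^ 2 / βd + 1 / lam) * (2 * s / (s - 1)) / 2
      ≤ Bd ^ 2 / (lam * βd - 1) * ((1 + s) ^ 2 / βd) := by
    have hL : (Bd ^ 2 / βd + 1 / lam) * (2 * s / (s - 1)) / 2
        = (Bd ^ 2 * lam + βd) * s / (βd * lam * (s - 1)) := by
      field_simp
    have hlbe : lam * βd - 1 = s ^ 2 - 1 := by rw [hs2]
    have h2' : (0:ℝ) < s ^ 2 - 1 := by nlinarith
    rw [hL, hlbe, div_mul_div_comm, div_le_div_iff₀ (by positivity) (by positivity)]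
    have hd : 0 ≤ βd * (s - 1) * (1 + s) * (lam * Bd ^ 2 - βd * s) :=
      mul_nonneg (mul_nonneg (mul_nonneg hβd.le hsm1.le) (by linarith)) (by linarith)
    nlinarith [hd]
  calc (Bd ^ 2 / βd + 1 / lam) * (2 * s / (s - 1)) * ε / 2
      = ((Bd ^ 2 / βd + 1 / lam) * (2 * s / (s - 1)) / 2) * ε := by ring
    _ ≤ (Bd ^ 2 / (lam * βd - 1) * ((1 + s) ^ 2 / βd)) * ε :=
        mul_le_mul_of_nonneg_right h hε
    _ = Bd ^ 2 * ε / (lam * βd - 1) * (1 / Real.sqrt βd + Real.sqrt lam) ^ 2 := by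
        rw [e2]; ring

/-- Forward generative property: if `∇ψ†` is `B†`-Lipschitz, `ψ†` has a conjugate potential
`φ†` with `1/β†`-Lipschitz gradient, and the regularized correlations are `ε`-close to the
true correlations, then `W₂²((∇ψ†)_*P, Q) ≤ (B†)²·ε/(λβ† - 1)·(1/√β† + √λ)²`. -/
theorem forward_generative_property {D : ℕ}
    (P Q : Measure (EuclideanSpace ℝ (Fin D)))
    [IsProbabilityMeasure P] [IsProbabilityMeasure Q]
    (hP2 : Integrable (fun x => ‖x‖ ^ 2) P)
    (hQ2 : Integrable (fun y => ‖y‖ ^ 2) Q)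
    -- Brenier potentials
    (ψs φs : EuclideanSpace ℝ (Fin D) → ℝ)
    (hψs : Differentiable ℝ ψs) (hψsc : ConvexOn ℝ Set.univ ψs)
    (hφs : Differentiable ℝ φs) (hφsc : ConvexOn ℝ Set.univ φs)
    (hinv : ∀ y, gradient ψs (gradient φs y) = y)
    (hQP : Q.map (gradient φs) = P)
    (hPQ : P.map (gradient ψs) = Q)
    -- discriminators
    (ψd : EuclideanSpace ℝ (Fin D) → ℝ) (hψd : Differentiable ℝ ψd)
    (βd : ℝ) (hβd : 0 < βd)
    (hstrong : ConvexOn ℝ Set.univ (fun x => ψd x - βd / 2 * ‖x‖ ^ 2))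
    (φc : EuclideanSpace ℝ (Fin D) → ℝ) (hφc : Differentiable ℝ φc)
    (hφcc : ConvexOn ℝ Set.univ φc)
    (lam : ℝ) (hlam : 1 / βd < lam)
    -- integrability of all the integrals involved
    (hI1 : Integrable ψd P)
    (hI2 : Integrable (fun y => ⟪gradient φc y, y⟫ - ψd (gradient φc y)) Q)
    (hI3 : Integrable (fun y => ‖gradient ψd (gradient φc y) - y‖ ^ 2) Q)
    (hI4 : Integrable (fun y => ⟪y, gradient φs y⟫) Q)
    -- `∇ψ†` is `B†`-Lipschitz with `B† ≥ β†`
    (Bd : ℝ) (hBd : βd ≤ Bd)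
    (hBdLip : ∀ x x', ‖gradient ψd x - gradient ψd x'‖ ≤ Bd * ‖x - x'‖)
    -- conjugate potential `φ†` of `ψ†`
    (φd : EuclideanSpace ℝ (Fin D) → ℝ) (hφd : Differentiable ℝ φd)
    (hφdc : ConvexOn ℝ Set.univ φd)
    (hφdinv : ∀ y, gradient ψd (gradient φd y) = y)
    (hφdinv' : ∀ x, gradient φd (gradient ψd x) = x)
    (hφdLip : ∀ y y', ‖gradient φd y - gradient φd y'‖ ≤ (1 / βd) * ‖y - y'‖)
    (ε : ℝ) (hε : 0 ≤ ε)
    (hclose : (∫ x, ψd x ∂P) + (∫ y, (⟪gradient φc y, y⟫ - ψd (gradient φc y)) ∂Q)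
        + lam / 2 * (∫ y, ‖gradient ψd (gradient φc y) - y‖ ^ 2 ∂Q) ≤
      (∫ y, ⟪y, gradient φs y⟫ ∂Q) + ε) :
    W2sq (P.map (gradient ψd)) Q ≤
      ENNReal.ofReal (Bd ^ 2 * ε / (lam * βd - 1)
        * (1 / Real.sqrt βd + Real.sqrt lam) ^ 2) := by
  have hlam0 : 0 < lam := lt_trans (by positivity) hlam
  have hBd0 : 0 < Bd := lt_of_lt_of_le hβd hBd
  have hlb : 1 < lam * βd := by
    rw [div_lt_iff₀ hβd] at hlam
    linarith
  set s : ℝ := Real.sqrt (lam * βd) with hs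
  have hs2 : s ^ 2 = lam * βd := Real.sq_sqrt (by positivity)
  have hs1 : 1 < s := by
    nlinarith [Real.sqrt_nonneg (lam * βd)]
  have hsm1 : (0:ℝ) < s - 1 := by linarith
  set C : ℝ := (Bd ^ 2 / βd + 1 / lam) * (2 * s / (s - 1)) with hC
  have hC0 : 0 ≤ C := by
    apply mul_nonneg (by positivity)
    apply div_nonneg <;> linarith
  -- measurability of the gradients involved
  have hgm : Measurable (gradient φs) := measurable_gradient_aux φs
  have hSm : Measurable (gradient ψd) := measurable_gradient_aux ψd
  have hGm : Measurable (gradient ψs) := measurable_gradient_aux ψs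
  -- the excess functional
  set I : EuclideanSpace ℝ (Fin D) → ℝ := fun y =>
    ψd (gradient φs y) + (⟪gradient φc y, y⟫ - ψd (gradient φc y))
      + lam / 2 * ‖gradient ψd (gradient φc y) - y‖ ^ 2 - ⟪y, gradient φs y⟫ with hI
  -- pointwise key inequality
  have key : ∀ y, ‖gradient ψd (gradient φs y) - y‖ ^ 2 ≤ C * I y := by
    intro y
    set a : ℝ := ‖gradient ψd (gradient φc y) - y‖ with hadef
    set b : ℝ := ‖gradient φs y - gradient φc y‖ with hbdef
    have ha : 0 ≤ a := norm_nonneg _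
    have hb : 0 ≤ b := norm_nonneg _
    have hstrong' := strong_grad_ineq_aux hψd hstrong (gradient φc y) (gradient φs y)
    have hinner : ⟪gradient ψd (gradient φc y) - y, gradient φs y - gradient φc y⟫
        = ⟪gradient ψd (gradient φc y), gradient φs y - gradient φc y⟫
          - ⟪y, gradient φs y⟫ + ⟪y, gradient φc y⟫ := by
      simp only [inner_sub_left, inner_sub_right]
      ring
    have hcsin : -(a * b) ≤ ⟪gradient ψd (gradient φc y) - y, gradient φs y - gradient φc y⟫ := by
      have h1 := abs_real_inner_le_norm (gradient ψd (gradient φc y) - y)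
        (gradient φs y - gradient φc y)
      have h2 := neg_abs_le ⟪gradient ψd (gradient φc y) - y, gradient φs y - gradient φc y⟫
      rw [← hadef, ← hbdef] at h1
      linarith
    have hq : lam / 2 * a ^ 2 - a * b + βd / 2 * b ^ 2 ≤ I y := by
      have hcomm : ⟪gradient φc y, y⟫ = ⟪y, gradient φc y⟫ := real_inner_comm _ _
      simp only [hI]
      linarith [hstrong', hcsin, hinner]
    have hup : ‖gradient ψd (gradient φs y) - y‖ ≤ Bd * b + a := by
      have e : gradient ψd (gradient φs y) - y
          = (gradient ψd (gradient φs y) - gradient ψd (gradient φc y))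
            + (gradient ψd (gradient φc y) - y) := by abel
      calc ‖gradient ψd (gradient φs y) - y‖
          ≤ ‖gradient ψd (gradient φs y) - gradient ψd (gradient φc y)‖ + a := by
            rw [e]; exact norm_add_le _ _
        _ ≤ Bd * b + a := by
            have := hBdLip (gradient φs y) (gradient φc y)
            rw [← hbdef] at this
            linarith
    have hres := pointwise_core_aux hβd hlam0 hs1 hs2 rfl hq
      (norm_nonneg (gradient ψd (gradient φs y) - y)) hup
    rw [hC]
    exact hres
  -- integrability of I and bound on its integral
  have hψdc : Continuous ψd := hψd.continuous
  have hf1 : Integrable (fun y => ψd (gradient φs y)) Q := by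
    have h0 : Integrable ψd (Q.map (gradient φs)) := by rw [hQP]; exact hI1
    exact (integrable_map_measure hψdc.aestronglyMeasurable hgm.aemeasurable).mp h0
  have hIint : Integrable I Q := ((hf1.add hI2).add (hI3.const_mul (lam / 2))).sub hI4
  have hIeq : ∫ x, ψd x ∂P = ∫ y, ψd (gradient φs y) ∂Q := by
    rw [← hQP, integral_map hgm.aemeasurable hψdc.aestronglyMeasurable]
  have hIle : ∫ y, I y ∂Q ≤ ε := by
    have h3' : Integrable (fun y => lam / 2 * ‖gradient ψd (gradient φc y) - y‖ ^ 2) Q :=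
      hI3.const_mul _
    have h12 : Integrable (fun y =>
        ψd (gradient φs y) + (⟪gradient φc y, y⟫ - ψd (gradient φc y))) Q := hf1.add hI2
    have h123 : Integrable (fun y =>
        ψd (gradient φs y) + (⟪gradient φc y, y⟫ - ψd (gradient φc y))
          + lam / 2 * ‖gradient ψd (gradient φc y) - y‖ ^ 2) Q := h12.add h3'
    simp only [hI]
    rw [integral_sub h123 hI4, integral_add h12 h3', integral_add hf1 hI2,
      integral_const_mul]
    rw [← hIeq]
    linarith [hclose]
  -- integrability and bound for the transport discrepancy
  have hJm : Measurable fun y => ‖gradient ψd (gradient φs y) - y‖ ^ 2 :=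
    (((hSm.comp hgm).sub measurable_id).norm.pow_const 2)
  have hJint : Integrable (fun y => ‖gradient ψd (gradient φs y) - y‖ ^ 2) Q := by
    refine (hIint.const_mul C).mono' hJm.aestronglyMeasurable (ae_of_all _ fun y => ?_)
    rw [Real.norm_eq_abs, abs_of_nonneg (by positivity)]
    exact key y
  have hJ : ∫ y, ‖gradient ψd (gradient φs y) - y‖ ^ 2 ∂Q ≤ C * ε := by
    have h1 := integral_mono hJint (hIint.const_mul C) key
    rw [integral_const_mul] at h1
    calc ∫ y, ‖gradient ψd (gradient φs y) - y‖ ^ 2 ∂Q ≤ C * ∫ y, I y ∂Q := h1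
      _ ≤ C * ε := mul_le_mul_of_nonneg_left hIle hC0
  -- the coupling
  have hfm : Measurable fun x => (gradient ψd x, gradient ψs x) := hSm.prodMk hGm
  haveI hprob : IsProbabilityMeasure
      (P.map fun x => (gradient ψd x, gradient ψs x)) :=
    Measure.isProbabilityMeasure_map hfm.aemeasurable
  have hmeasInt : Measurable fun p : EuclideanSpace ℝ (Fin D) × EuclideanSpace ℝ (Fin D) =>
      ENNReal.ofReal (‖p.1 - p.2‖ ^ 2 / 2) := by
    apply Measurable.ennreal_ofReal
    exact (((continuous_fst.sub continuous_snd).norm.pow 2).div_const 2).measurable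
  have step1 : W2sq (P.map (gradient ψd)) Q ≤
      ∫⁻ p, ENNReal.ofReal (‖p.1 - p.2‖ ^ 2 / 2)
        ∂(P.map fun x => (gradient ψd x, gradient ψs x)) := by
    rw [W2sq]
    refine iInf_le_of_le (P.map fun x => (gradient ψd x, gradient ψs x)) ?_
    refine iInf_le_of_le hprob ?_
    refine iInf_le_of_le ?_ (iInf_le_of_le ?_ le_rfl)
    · rw [Measure.map_map measurable_fst hfm]
      rfl
    · rw [Measure.map_map measurable_snd hfm]
      exact hPQ
  have step2 : ∫⁻ p, ENNReal.ofReal (‖p.1 - p.2‖ ^ 2 / 2)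
        ∂(P.map fun x => (gradient ψd x, gradient ψs x))
      = ∫⁻ x, ENNReal.ofReal (‖gradient ψd x - gradient ψs x‖ ^ 2 / 2) ∂P :=
    lintegral_map hmeasInt hfm
  have hPm : Measurable fun x => ‖gradient ψd x - gradient ψs x‖ ^ 2 / 2 :=
    (((hSm.sub hGm).norm.pow_const 2).div_const 2)
  have hPint : Integrable (fun x => ‖gradient ψd x - gradient ψs x‖ ^ 2 / 2) P := by
    rw [← hQP]
    refine (integrable_map_measure hPm.aestronglyMeasurable hgm.aemeasurable).mpr ?_
    have e : ((fun x => ‖gradient ψd x - gradient ψs x‖ ^ 2 / 2) ∘ (gradient φs))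
        = fun y => ‖gradient ψd (gradient φs y) - y‖ ^ 2 / 2 := by
      funext y
      simp [Function.comp, hinv y]
    rw [e]
    exact hJint.div_const 2
  have step3 : ∫⁻ x, ENNReal.ofReal (‖gradient ψd x - gradient ψs x‖ ^ 2 / 2) ∂P
      = ENNReal.ofReal (∫ x, ‖gradient ψd x - gradient ψs x‖ ^ 2 / 2 ∂P) :=
    (ofReal_integral_eq_lintegral_ofReal hPint (ae_of_all _ fun x => by positivity)).symm
  have step4 : ∫ x, ‖gradient ψd x - gradient ψs x‖ ^ 2 / 2 ∂P
      = ∫ y, ‖gradient ψd (gradient φs y) - y‖ ^ 2 / 2 ∂Q := by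
    rw [← hQP, integral_map hgm.aemeasurable hPm.aestronglyMeasurable]
    simp only [hinv]
  -- final constant comparison
  have hfinal : C * ε / 2 ≤
      Bd ^ 2 * ε / (lam * βd - 1) * (1 / Real.sqrt βd + Real.sqrt lam) ^ 2 := by
    rw [hC]
    exact const_core_aux hβd hlam0 hBd hs1 hε hs hs2
  -- assemble
  calc W2sq (P.map (gradient ψd)) Q
      ≤ ∫⁻ p, ENNReal.ofReal (‖p.1 - p.2‖ ^ 2 / 2)
          ∂(P.map fun x => (gradient ψd x, gradient ψs x)) := step1
    _ = ∫⁻ x, ENNReal.ofReal (‖gradient ψd x - gradient ψs x‖ ^ 2 / 2) ∂P := step2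
    _ = ENNReal.ofReal (∫ x, ‖gradient ψd x - gradient ψs x‖ ^ 2 / 2 ∂P) := step3
    _ ≤ ENNReal.ofReal (Bd ^ 2 * ε / (lam * βd - 1)
          * (1 / Real.sqrt βd + Real.sqrt lam) ^ 2) := by
        apply ENNReal.ofReal_le_ofReal
        rw [step4, integral_div]
        linarith [hJ, hfinal]
end
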